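/- Let m be an integer and q a rational number. If for every prime number p the rational number m/p + q is an integer, then m = 0 and q is an integer. -/
import Mathlib


/-- If `m/p + q` is an integer for every prime `p`, then `m = 0` and `q` is an integer. -/
theorem int_of_forall_prime (m : ℤ) (q : ℚ)
    (h : ∀ p : ℕ, p.Prime → ∃ z : ℤ, (m : ℚ) / (p : ℚ) + q = (z : ℚ)) :
    m = 0 ∧ ∃ z : ℤ, q = (z : ℚ) := by
  obtain ⟨p, hpN, hp⟩ := Nat.exists_infinite_primes ((m * q.den).natAbs + 1)
  obtain ⟨z, hz⟩ := h p hp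
  have hp0 : (p : ℚ) ≠ 0 := Nat.cast_ne_zero.mpr hp.ne_zero
  have hq : (q.num : ℚ) = q * q.den := (Rat.mul_den_eq_num q).symm
  have key : m * (q.den : ℤ) = p * (z * q.den - q.num) := by
    have : ((m * (q.den : ℤ) : ℤ) : ℚ) = ((p * (z * q.den - q.num) : ℤ) : ℚ) := by
      push_cast
      rw [hq]
      field_simp at hz
      linear_combination (q.den : ℚ) * hz
    exact_mod_cast this
  have hdvd : (p : ℤ) ∣ m * q.den := ⟨_, key⟩
  have hm : m * (q.den : ℤ) = 0 := by
    by_contra h0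
    have h1 : (p : ℤ) ≤ |m * q.den| :=
      Int.le_of_dvd (abs_pos.mpr h0) ((dvd_abs _ _).mpr hdvd)
    rw [Int.abs_eq_natAbs] at h1
    omega
  have hden : (q.den : ℤ) ≠ 0 := by exact_mod_cast q.den_ne_zero
  have hm0 : m = 0 := by
    rcases mul_eq_zero.mp hm with h' | h'
    · exact h'
    · exact absurd h' hden
  refine ⟨hm0, ?_⟩
  obtain ⟨w, hw⟩ := h 2 Nat.prime_two
  refine ⟨w, ?_⟩
  rw [hm0] at hw
  simpa using hw
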